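/- Let E be a vector lattice and V a vector space, and let P : E → V be an s-homogeneous polynomial (s ≥ 2) whose generating symmetric s-linear map is orthosymmetric. Then for x, y ∈ E with x ⊥ y and any z ∈ E, Σ_{k=1}^{s} C(s,k) T(x,...,x,y+z,...,y+z) = Σ_{k=1}^{s} C(s,k) T(x,...,x,z,...,z), where x appears k times in each term. -/

import Mathlib

open scoped BigOperators

/-- If the symmetric generating s-linear map `T` of `P` is orthosymmetric and `x ⊥ y`,
then `Σ_{k=1}^s C(s,k) T(x,…,x,y+z,…,y+z) = Σ_{k=1}^s C(s,k) T(x,…,x,z,…,z)`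
(with `x` appearing `k` times in each term). -/
theorem stmt18 {E V : Type*} [AddCommGroup E] [Lattice E]
    [CovariantClass E E (· + ·) (· ≤ ·)] [Module ℝ E]
    [AddCommGroup V] [Module ℝ V] (s : ℕ) (hs : 2 ≤ s)
    (T : MultilinearMap ℝ (fun _ : Fin s => E) V)
    (hsymm : ∀ (v : Fin s → E) (σ : Equiv.Perm (Fin s)), T (v ∘ σ) = T v)
    (hos : ∀ v : Fin s → E, (∃ i j, i ≠ j ∧ |v i| ⊓ |v j| = 0) → T v = 0)
    (x y z : E) (hxy : |x| ⊓ |y| = 0) :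
    ∑ k ∈ Finset.Icc 1 s,
        (s.choose k) • T (fun i : Fin s => if (i : ℕ) < k then x else y + z) =
    ∑ k ∈ Finset.Icc 1 s,
        (s.choose k) • T (fun i : Fin s => if (i : ℕ) < k then x else z) := by
  refine Finset.sum_congr rfl ?_
  intro k hk
  simp only [Finset.mem_Icc] at hk
  obtain ⟨hk1, hks⟩ := hk
  congr 1
  have i0 : Fin s := ⟨0, by omega⟩
  have key : ∀ A : Finset (Fin s),
      T (fun i : Fin s => if (i : ℕ) < k then x else if i ∈ A then y + z else z)
        = T (fun i : Fin s => if (i : ℕ) < k then x else z) := by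
    intro A
    induction A using Finset.induction with
    | empty => simp
    | @insert j A' hj ih =>
      by_cases hjk : (j : ℕ) < k
      · have heq : (fun i : Fin s => if (i : ℕ) < k then x else if i ∈ insert j A' then y + z else z)
            = (fun i : Fin s => if (i : ℕ) < k then x else if i ∈ A' then y + z else z) := by
          funext i
          by_cases hik : (i : ℕ) < k
          · simp [hik]
          · have hij : i ≠ j := by rintro rfl; exact hik hjk
            simp [hik, hij]
        rw [heq, ih]
      · set v : Fin s → E := fun i : Fin s => if (i : ℕ) < k then x else if i ∈ A' then y + z else z with hv
        have heq : (fun i : Fin s => if (i : ℕ) < k then x else if i ∈ insert j A' then y + z else z)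
            = Function.update v j (y + z) := by
          funext i
          by_cases hij : i = j
          · subst hij; simp [hjk, hv]
          · simp [Function.update_of_ne hij, hij, hv]
        rw [heq, T.map_update_add]
        have hy0 : T (Function.update v j y) = 0 := by
          apply hos
          refine ⟨⟨0, by omega⟩, j, ?_, ?_⟩
          · intro h
            have : ((⟨0, by omega⟩ : Fin s) : ℕ) = (j : ℕ) := by rw [h]
            simp only [Fin.val_mk] at this
            omega
          · have hne : (⟨0, by omega⟩ : Fin s) ≠ j := by
              intro h
              have : ((⟨0, by omega⟩ : Fin s) : ℕ) = (j : ℕ) := by rw [h]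
              simp only [Fin.val_mk] at this
              omega
            rw [Function.update_of_ne hne, Function.update_self]
            simp only [hv]
            rw [if_pos (by simpa [Nat.pos_iff_ne_zero, ← Nat.one_le_iff_ne_zero] using hk1)]
            exact hxy
        rw [hy0, zero_add]
        have hzeq : Function.update v j z = v := by
          funext i
          by_cases hij : i = j
          · subst hij
            simp [hv, hjk, hj]
          · simp [Function.update_of_ne hij]
        rw [hzeq, hv, ih]
  have := key Finset.univ
  simpa using this
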